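/- Let d ≥ 1 and m ≥ 1 be integers, let f ∈ ℂ[x,y,z] be homogeneous of degree m·d, and let k be an integer with 0 ≤ k < m. Then the ℂ-linear map sending a homogeneous polynomial g ∈ ℂ[x,y,z] of usual degree k to its residue class in ℂ[x,y,z,w]/(w^d + f) is injective, and for every P ∈ ℂ[x,y,z,w] that is weighted homogeneous of weighted degree k (with weights 1,1,1,m on x,y,z,w) there exists a homogeneous g ∈ ℂ[x,y,z] of usual degree k whose residue class equals that of P. -/

import Mathlib

open MvPolynomial

noncomputable section

/-- The polynomial ring ℂ[x,y,z,w], with x,y,z,w the variables indexed 0,1,2,3. -/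
abbrev S := MvPolynomial (Fin 4) ℂ

/-- The variable `w`. -/
def w : S := X 3

/-- `noW p` means `p` lies in the subring ℂ[x,y,z], i.e. does not involve `w`. -/
def noW (p : S) : Prop := ∀ μ ∈ p.support, μ 3 = 0

/-- The weights 1,1,1,m on x,y,z,w. -/
def wt (m : ℕ) : Fin 4 → ℕ := fun i => if i = 3 then m else 1

lemma weight_wt_apply (m : ℕ) (μ : Fin 4 →₀ ℕ) :
    Finsupp.weight (wt m) μ = μ 0 + μ 1 + μ 2 + μ 3 * m := by
  rw [Finsupp.weight_apply, Finsupp.sum_fintype]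
  · simp [Fin.sum_univ_four, show wt m 0 = 1 from rfl, show wt m 1 = 1 from rfl,
      show wt m 2 = 1 from rfl, show wt m 3 = m from rfl]
  · intro i; simp

lemma weight_one_apply' (μ : Fin 4 →₀ ℕ) :
    Finsupp.weight (1 : Fin 4 → ℕ) μ = μ 0 + μ 1 + μ 2 + μ 3 := by
  rw [Finsupp.weight_apply, Finsupp.sum_fintype]
  · simp [Fin.sum_univ_four]
  · intro i; simp

/-- A `w`-free homogeneous polynomial of degree `k` is weighted homogeneous of degree `k`. -/
lemma noW_homog_isWeighted (m k : ℕ) {p : S} (hp : noW p) (hph : p.IsHomogeneous k) :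
    IsWeightedHomogeneous (wt m) p k := by
  intro μ hμ
  have h3 : μ 3 = 0 := hp μ (mem_support_iff.mpr hμ)
  have := hph hμ
  rw [weight_one_apply'] at this
  rw [weight_wt_apply, h3]
  omega

theorem statement5 (d m k : ℕ) (hd : 1 ≤ d) (hm : 1 ≤ m) (hk : k < m)
    (f : S) (hf : noW f) (hfh : f.IsHomogeneous (m * d)) :
    (∀ g₁ g₂ : S, noW g₁ → g₁.IsHomogeneous k → noW g₂ → g₂.IsHomogeneous k →
      g₁ - g₂ ∈ Ideal.span {w ^ d + f} → g₁ = g₂) ∧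
    (∀ P : S, IsWeightedHomogeneous (wt m) P k →
      ∃ g : S, noW g ∧ g.IsHomogeneous k ∧ P - g ∈ Ideal.span {w ^ d + f}) := by
  classical
  -- `w ^ d + f` is weighted homogeneous of weighted degree `m * d`.
  have hwd : IsWeightedHomogeneous (wt m) (w ^ d) (m * d) := by
    rw [w, X_pow_eq_monomial]
    apply isWeightedHomogeneous_monomial
    rw [weight_wt_apply]
    simp [Finsupp.single_apply, mul_comm]
  have hr : IsWeightedHomogeneous (wt m) (w ^ d + f) (m * d) :=
    hwd.add (noW_homog_isWeighted m (m * d) hf hfh)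
  constructor
  · intro g₁ g₂ h1 h1h h2 h2h hmem
    have hg : IsWeightedHomogeneous (wt m) (g₁ - g₂) k := by
      have := (weightedHomogeneousSubmodule ℂ (wt m) k).sub_mem
        ((mem_weightedHomogeneousSubmodule _ _ _ _).mpr (noW_homog_isWeighted m k h1 h1h))
        ((mem_weightedHomogeneousSubmodule _ _ _ _).mpr (noW_homog_isWeighted m k h2 h2h))
      exact (mem_weightedHomogeneousSubmodule _ _ _ _).mp this
    obtain ⟨q, hq⟩ := Ideal.mem_span_singleton.mp hmem
    have hzero : g₁ - g₂ = 0 := by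
      have key : weightedHomogeneousComponent (wt m) k (g₁ - g₂) = g₁ - g₂ :=
        hg.weightedHomogeneousComponent_same
      rw [← key, hq]
      -- decompose q into weighted homogeneous components
      have hqsum : q = finsum fun j => weightedHomogeneousComponent (wt m) j q :=
        (sum_weightedHomogeneousComponent _ q).symm
      have hfin2 : (Function.support fun j =>
          (w ^ d + f) * weightedHomogeneousComponent (wt m) j q).Finite := by
        apply Set.Finite.subset (weightedHomogeneousComponent_finsupp q)
        intro j hj
        simp only [Function.mem_support] at hj ⊢
        intro h0
        apply hj
        rw [h0, mul_zero]
      rw [hqsum, mul_finsum _ _,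
        finsum_eq_sum _ hfin2, map_sum]
      apply Finset.sum_eq_zero
      intro j _
      apply IsWeightedHomogeneous.weightedHomogeneousComponent_ne
      · exact hr.mul (weightedHomogeneousComponent_isWeightedHomogeneous j q)
      · have : m ≤ m * d := Nat.le_mul_of_pos_right m hd
        omega
    have := sub_eq_zero.mp hzero
    exact this
  · intro P hP
    refine ⟨P, ?_, ?_, by simp⟩
    · intro μ hμ
      have := hP (mem_support_iff.mp hμ)
      rw [weight_wt_apply] at this
      nlinarith [Nat.le_of_lt_succ (Nat.lt_succ_of_lt hk)]
    · intro μ hμ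
      have hw := hP hμ
      rw [weight_wt_apply] at hw
      have h3 : μ 3 = 0 := by nlinarith
      rw [h3] at hw
      rw [weight_one_apply', h3]
      omega
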